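/- Let b' < b be positive integers, X a finite set, and F ⊆ 2^X. If Maker has a winning strategy in the (1,b) Maker-Breaker game on (X,F), then Maker has a strategy to win the (1,b') game on (X,F) within ⌈|X|/(b+1)⌉ moves. -/

import Mathlib

open Finset

variable {α : Type*} [Fintype α] [DecidableEq α]

/-- `makerWinsAux F b fuel t M B` : in the `(1,b)` Maker-Breaker game on the finite
board `α` with family of winning sets `F`, from the position where Maker has claimed
`M` and Breaker has claimed `B`, the player to move being Maker if `t = true` and
Breaker if `t = false`, Maker can force that at some point he has fully claimed some
winning set.  Maker claims one previously unclaimed element per turn and Breaker claims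
`b` previously unclaimed elements (or all remaining ones if fewer remain).  `fuel`
bounds the number of remaining turns; `fuel = |α| + 1` captures the full game. -/
def makerWinsAux (F : Finset (Finset α)) (b : ℕ) :
    ℕ → Bool → Finset α → Finset α → Prop
  | 0, _, M, _ => ∃ W ∈ F, W ⊆ M
  | fuel + 1, t, M, B =>
      (∃ W ∈ F, W ⊆ M) ∨
        (let free := Finset.univ \ (M ∪ B)
        free.Nonempty ∧
          if t then
            ∃ x ∈ free, makerWinsAux F b fuel false (insert x M) B
          else
            ∀ S ⊆ free, S.card = min b free.card →
              makerWinsAux F b fuel true M (B ∪ S))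

/-- `makerWinsInAux F b fuel t M B m` : as in `makerWinsAux`, but moreover Maker can
win making at most `m` further moves of his own. -/
def makerWinsInAux (F : Finset (Finset α)) (b : ℕ) :
    ℕ → Bool → Finset α → Finset α → ℕ → Prop
  | 0, _, M, _, _ => ∃ W ∈ F, W ⊆ M
  | fuel + 1, t, M, B, m =>
      (∃ W ∈ F, W ⊆ M) ∨
        (let free := Finset.univ \ (M ∪ B)
        free.Nonempty ∧
          if t then
            0 < m ∧ ∃ x ∈ free, makerWinsInAux F b fuel false (insert x M) B (m - 1)
          else
            ∀ S ⊆ free, S.card = min b free.card →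
              makerWinsInAux F b fuel true M (B ∪ S) m)

/-- Maker has a winning strategy in the `(1,b)` game `(α,F)`, moving first
(`t = true`) or second (`t = false`). -/
def MakerWins (F : Finset (Finset α)) (b : ℕ) (t : Bool) : Prop :=
  makerWinsAux F b (Fintype.card α + 1) t ∅ ∅

/-- Maker has a strategy to win the `(1,b)` game `(α,F)` within `m` moves. -/
def MakerWinsIn (F : Finset (Finset α)) (b : ℕ) (t : Bool) (m : ℕ) : Prop :=
  makerWinsInAux F b (Fintype.card α + 1) t ∅ ∅ m

lemma fake_key (F : Finset (Finset α)) (b b' : ℕ) (hbb : b' ≤ b) :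
    ∀ fuel (t : Bool) (M Bs Ba : Finset α) (m : ℕ),
      Ba ⊆ Bs →
      (univ \ (M ∪ Bs)).card ≤ m * (b + 1) + (if t then 0 else b) →
      makerWinsAux F b fuel t M Bs →
      makerWinsInAux F b' fuel t M Ba m := by
  intro fuel
  induction fuel with
  | zero =>
    intro t M Bs Ba m _ _ h
    simpa [makerWinsInAux, makerWinsAux] using h
  | succ fuel ih =>
    intro t M Bs Ba m hBB hcard h
    rw [makerWinsAux] at h
    rw [makerWinsInAux]
    rcases h with h | ⟨hne, h⟩
    · exact Or.inl h
    right
    have hsub : univ \ (M ∪ Bs) ⊆ univ \ (M ∪ Ba) :=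
      sdiff_subset_sdiff le_rfl (union_subset_union le_rfl hBB)
    refine ⟨hne.mono hsub, ?_⟩
    cases t with
    | true =>
      simp only [if_true] at h hcard ⊢
      obtain ⟨x, hx, hwin⟩ := h
      have hcard1 : 1 ≤ (univ \ (M ∪ Bs)).card := card_pos.mpr ⟨x, hx⟩
      obtain ⟨m', rfl⟩ : ∃ m', m = m' + 1 := by
        rcases m with _ | m'
        · simp only [Nat.zero_mul, Nat.zero_add, Nat.add_zero] at hcard
          omega
        · exact ⟨m', rfl⟩
      refine ⟨Nat.succ_pos _, x, hsub hx, ?_⟩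
      apply ih false (insert x M) Bs Ba m' hBB _ hwin
      have heq : univ \ (insert x M ∪ Bs) = (univ \ (M ∪ Bs)) \ {x} := by
        ext a
        simp only [mem_sdiff, mem_union, mem_insert, mem_singleton, mem_univ, true_and]
        tauto
      rw [heq, card_sdiff_of_subset (singleton_subset_iff.mpr hx), card_singleton]
      have hring : (m' + 1) * (b + 1) = m' * (b + 1) + b + 1 := by ring
      simp only [Bool.false_eq_true, if_false]
      omega
    | false =>
      simp only [Bool.false_eq_true, if_false] at h hcard ⊢
      intro S hS hScard
      set freeS := univ \ (M ∪ Bs) with hfreeS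
      have hSint : (S ∩ freeS).card ≤ min b freeS.card := by
        have h1 : (S ∩ freeS).card ≤ S.card := card_le_card inter_subset_left
        have h2 : (S ∩ freeS).card ≤ freeS.card := card_le_card inter_subset_right
        have h3 : S.card ≤ b := by
          rw [hScard]; exact le_trans (min_le_left _ _) hbb
        omega
      obtain ⟨S', hS'1, hS'2, hS'3⟩ :=
        exists_subsuperset_card_eq inter_subset_right hSint (min_le_right _ _)
      have hwin := h S' hS'2 hS'3
      apply ih true M (Bs ∪ S') (Ba ∪ S) m _ _ hwin
      · intro a ha
        rw [mem_union] at ha ⊢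
        rcases ha with ha | ha
        · exact Or.inl (hBB ha)
        · by_cases haf : a ∈ freeS
          · exact Or.inr (hS'1 (mem_inter.mpr ⟨ha, haf⟩))
          · left
            have h1 := hS ha
            simp only [hfreeS, mem_sdiff, mem_union, mem_univ, true_and,
              not_and, not_not] at haf h1
            tauto
      · have heq : univ \ (M ∪ (Bs ∪ S')) = freeS \ S' := by
          ext a
          simp only [hfreeS, mem_sdiff, mem_union, mem_univ, true_and]
          tauto
        rw [heq, card_sdiff_of_subset hS'2, hS'3]
        simp only [if_pos rfl] at hcard ⊢
        omega

/-- trick of fake moves. Let `b' < b` be positive integers. If Maker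
has a winning strategy in the `(1,b)` Maker-Breaker game `(α,F)`, then he has a
strategy to win the `(1,b')` game `(α,F)` within `⌈|α|/(b+1)⌉` moves. -/
theorem fake_moves (F : Finset (Finset α)) (b b' : ℕ) (hb' : 0 < b') (hbb : b' < b)
    (t : Bool) (h : MakerWins F b t) :
    MakerWinsIn F b' t ⌈(Fintype.card α : ℝ) / (b + 1)⌉₊ := by
  set m : ℕ := ⌈(Fintype.card α : ℝ) / (b + 1)⌉₊ with hm
  have hn : Fintype.card α ≤ m * (b + 1) := by
    have h1 : (Fintype.card α : ℝ) / (b + 1) ≤ m := Nat.le_ceil _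
    rw [div_le_iff₀ (by positivity)] at h1
    exact_mod_cast h1
  refine fake_key F b b' hbb.le _ t ∅ ∅ ∅ m (subset_refl _) ?_ h
  have hc : (univ \ ((∅ : Finset α) ∪ ∅)).card = Fintype.card α := by simp
  rw [hc]
  exact le_trans hn (Nat.le_add_right _ _)
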